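/- There exists a monomial ideal I of height 1 whose double LCM-dual is strictly larger than I: for I = (x_1^2, x_1x_2, x_1x_3) in K[x_1,x_2,x_3], one has Î = (x_2x_3, x_1x_3, x_1x_2) and the double LCM-dual equals (x_1,x_2,x_3) ≠ I. -/
import Mathlib


open MvPolynomial Finsupp

lemma sup3' {α} [SemilatticeSup α] [OrderBot α] (f : Fin 3 → α) :
    Finset.univ.sup f = f 0 ⊔ f 1 ⊔ f 2 := by
  rw [show (Finset.univ : Finset (Fin 3)) = {0,1,2} by decide]
  simp [Finset.sup_insert, sup_assoc]

lemma range3' {α} (f : Fin 3 → α) : Set.range f = {f 0, f 1, f 2} := by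
  ext x; constructor
  · rintro ⟨i, rfl⟩; fin_cases i <;> simp
  · rintro (rfl|rfl|rfl)
    exacts [⟨0, rfl⟩, ⟨1, rfl⟩, ⟨2, rfl⟩]

lemma mono_add' {K : Type*} [Field K] (a b : Fin 3 →₀ ℕ) :
    (monomial (a + b) (1 : K)) = monomial a 1 * monomial b 1 := by
  rw [monomial_mul, one_mul]


/-- the height-`1` monomial ideal `I = (x₁², x₁x₂, x₁x₃)` in `K[x₁,x₂,x₃]`
has LCM-dual `Î = (x₂x₃, x₁x₃, x₁x₂)` (obtained dividing `lcm(I) = x₁²x₂x₃` by each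
minimal generator, i.e. subtracting exponent vectors from the sup), and the double
LCM-dual is `(x₁,x₂,x₃)`, which is strictly larger than `I`. -/
theorem double_dual_ne_of_height_one {K : Type*} [Field K]
    (e : Fin 3 → (Fin 3 →₀ ℕ))
    (he : e = ![Finsupp.single 0 2, Finsupp.single 0 1 + Finsupp.single 1 1,
      Finsupp.single 0 1 + Finsupp.single 2 1])
    (I Ihat Ihathat : Ideal (MvPolynomial (Fin 3) K))
    (hI : I = Ideal.span (Set.range fun i => monomial (e i) (1 : K)))
    (hIhat : Ihat = Ideal.span
      (Set.range fun i => monomial (Finset.univ.sup e - e i) (1 : K)))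
    (hIhathat : Ihathat = Ideal.span (Set.range fun i =>
      monomial ((Finset.univ.sup fun j => Finset.univ.sup e - e j)
        - (Finset.univ.sup e - e i)) (1 : K))) :
    Ihat = Ideal.span {X 1 * X 2, X 0 * X 2, X 0 * X 1} ∧
    Ihathat = Ideal.span {X 0, X 1, X 2} ∧
    I < Ihathat := by
  have hs : Finset.univ.sup e = Finsupp.single 0 2 + Finsupp.single 1 1 + Finsupp.single 2 1 := by
    rw [sup3', he]; ext a; fin_cases a <;> simp [Finsupp.sup_apply]
  have h0 : Finset.univ.sup e - e 0 = Finsupp.single 1 1 + Finsupp.single 2 1 := by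
    rw [hs, he]; ext a; fin_cases a <;> simp [Finsupp.tsub_apply]
  have h1 : Finset.univ.sup e - e 1 = Finsupp.single 0 1 + Finsupp.single 2 1 := by
    rw [hs, he]; ext a; fin_cases a <;> simp [Finsupp.tsub_apply]
  have h2 : Finset.univ.sup e - e 2 = Finsupp.single 0 1 + Finsupp.single 1 1 := by
    rw [hs, he]; ext a; fin_cases a <;> simp [Finsupp.tsub_apply]
  have hs2 : (Finset.univ.sup fun j => Finset.univ.sup e - e j)
      = Finsupp.single 0 1 + Finsupp.single 1 1 + Finsupp.single 2 1 := by
    rw [sup3', h0, h1, h2]; ext a; fin_cases a <;> simp [Finsupp.sup_apply]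
  have k0 : (Finset.univ.sup fun j => Finset.univ.sup e - e j) - (Finset.univ.sup e - e 0)
      = Finsupp.single 0 1 := by
    rw [hs2, h0]; ext a; fin_cases a <;> simp [Finsupp.tsub_apply]
  have k1 : (Finset.univ.sup fun j => Finset.univ.sup e - e j) - (Finset.univ.sup e - e 1)
      = Finsupp.single 1 1 := by
    rw [hs2, h1]; ext a; fin_cases a <;> simp [Finsupp.tsub_apply]
  have k2 : (Finset.univ.sup fun j => Finset.univ.sup e - e j) - (Finset.univ.sup e - e 2)
      = Finsupp.single 2 1 := by
    rw [hs2, h2]; ext a; fin_cases a <;> simp [Finsupp.tsub_apply]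
  have mX : ∀ i : Fin 3, (monomial (Finsupp.single i 1) (1 : K)) = X i := fun i => rfl
  have Hhat : Ihat = Ideal.span {X 1 * X 2, X 0 * X 2, X 0 * X 1} := by
    rw [hIhat, range3', h0, h1, h2, mono_add', mono_add', mono_add', mX 0, mX 1, mX 2]
  have Hhathat : Ihathat = Ideal.span {X 0, X 1, X 2} := by
    rw [hIhathat, range3', k0, k1, k2, mX 0, mX 1, mX 2]
  refine ⟨Hhat, Hhathat, ?_⟩
  have one2 : (Finsupp.single 0 2 : Fin 3 →₀ ℕ) = Finsupp.single 0 1 + Finsupp.single 0 1 := by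
    rw [← Finsupp.single_add]
  have hle : I ≤ Ihathat := by
    rw [hI, Hhathat]
    refine Ideal.span_le.mpr ?_
    rintro x ⟨i, rfl⟩
    fin_cases i
    · show monomial (e 0) (1:K) ∈ Ideal.span {X 0, X 1, X 2}
      rw [he]
      show monomial (Finsupp.single 0 2) (1:K) ∈ _
      rw [one2, mono_add', mX 0]
      exact Ideal.mul_mem_left _ _ (Ideal.subset_span (by simp))
    · show monomial (e 1) (1:K) ∈ Ideal.span {X 0, X 1, X 2}
      rw [he]
      show monomial (Finsupp.single 0 1 + Finsupp.single 1 1) (1:K) ∈ _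
      rw [mono_add', mX 0, mX 1]
      exact Ideal.mul_mem_left _ _ (Ideal.subset_span (by simp))
    · show monomial (e 2) (1:K) ∈ Ideal.span {X 0, X 1, X 2}
      rw [he]
      show monomial (Finsupp.single 0 1 + Finsupp.single 2 1) (1:K) ∈ _
      rw [mono_add', mX 0, mX 2]
      exact Ideal.mul_mem_left _ _ (Ideal.subset_span (by simp))
  refine lt_of_le_of_ne hle (fun hEq => ?_)
  have hX1 : (X 1 : MvPolynomial (Fin 3) K) ∈ I := by
    rw [hEq, Hhathat]; exact Ideal.subset_span (by simp)
  have hIle : I ≤ Ideal.span {(X 0 : MvPolynomial (Fin 3) K)} := by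
    rw [hI]
    refine Ideal.span_le.mpr ?_
    rintro x ⟨i, rfl⟩
    refine Ideal.mem_span_singleton.mpr ?_
    fin_cases i
    · refine ⟨X 0, ?_⟩
      show monomial (e 0) (1:K) = _
      rw [he]
      show monomial (Finsupp.single 0 2) (1:K) = _
      rw [one2, mono_add', mX 0]
    · refine ⟨X 1, ?_⟩
      show monomial (e 1) (1:K) = _
      rw [he]
      show monomial (Finsupp.single 0 1 + Finsupp.single 1 1) (1:K) = _
      rw [mono_add', mX 0, mX 1]
    · refine ⟨X 2, ?_⟩
      show monomial (e 2) (1:K) = _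
      rw [he]
      show monomial (Finsupp.single 0 1 + Finsupp.single 2 1) (1:K) = _
      rw [mono_add', mX 0, mX 2]
  have hmem := Ideal.mem_span_singleton.mp (hIle hX1)
  obtain ⟨c, hc⟩ := hmem
  have := congrArg (eval fun i : Fin 3 => if i = 1 then (1 : K) else 0) hc
  simp at this
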